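/- Let X be a compactum (a compact perfect metric space with more than one point), let n ≥ 2 be an integer, and let f : X → X be a continuous map. Then F_n(f) is TT_{++} if and only if SF_n(f) is TT_{++}; moreover, if F_n(f) is TT_{++}, then f is TT_{++}. -/

import Mathlib

open Metric Set TopologicalSpace

variable (X : Type*) [MetricSpace X] (n : ℕ)

/-- The `n`-fold symmetric product `F_n(X)`: nonempty subsets of `X` with at most `n`
points, as a subspace of the nonempty compact subsets of `X` with the Hausdorff metric. -/
abbrev Fn := {A : NonemptyCompacts X // (A : Set X).Finite ∧ (A : Set X).ncard ≤ n}

/-- The induced map `F_n(f)` on the `n`-fold symmetric product, `A ↦ f(A)`. -/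
noncomputable def FnMap (f : X → X) : Fn X n → Fn X n := fun A =>
  ⟨⟨⟨f '' (A.1 : Set X), (A.2.1.image f).isCompact⟩, A.1.nonempty.image f⟩,
    A.2.1.image f, le_trans (Set.ncard_image_le A.2.1) A.2.2⟩

/-- `F_1(X) ⊆ F_n(X)`: the set of singletons. -/
def F1 : Set (Fn X n) := {A | ∃ x : X, (A.1 : Set X) = {x}}

/-- The setoid collapsing `F_1(X)` to a point. -/
def SFnSetoid : Setoid (Fn X n) where
  r A B := A = B ∨ (A ∈ F1 X n ∧ B ∈ F1 X n)
  iseqv := by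
    refine ⟨fun _ => Or.inl rfl, fun h => h.imp Eq.symm And.symm, fun h₁ h₂ => ?_⟩
    rcases h₁ with rfl | h₁
    · exact h₂
    · rcases h₂ with rfl | h₂
      · exact Or.inr h₁
      · exact Or.inr ⟨h₁.1, h₂.2⟩

/-- The `n`-fold symmetric product suspension `SF_n(X) = F_n(X)/F_1(X)`,
with the quotient topology. -/
abbrev SFn := Quotient (SFnSetoid X n)

/-- The quotient map `q : F_n(X) → SF_n(X)`. -/
def SFnQ : Fn X n → SFn X n := Quotient.mk (SFnSetoid X n)

/-- The induced map `SF_n(f)` on the suspension, with `SF_n(f) ∘ q = q ∘ F_n(f)`. -/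
noncomputable def SFnMap (f : X → X) : SFn X n → SFn X n :=
  Quotient.lift (fun A => SFnQ X n (FnMap X n f A))
    (fun A B h => Quotient.sound (by
      rcases h with rfl | ⟨⟨x, hx⟩, ⟨y, hy⟩⟩
      · exact Or.inl rfl
      · exact Or.inr ⟨⟨f x, by simp [FnMap, hx]⟩, ⟨f y, by simp [FnMap, hy]⟩⟩))

/-- The metric `ρ` on `SF_n(X)`:
`ρ(χ₁,χ₂) = H(F_1(X) ∪ q⁻¹(χ₁), F_1(X) ∪ q⁻¹(χ₂))` where `H` is the Hausdorff
distance between subsets of `F_n(X)`. -/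
noncomputable def SFnDist : SFn X n → SFn X n → ℝ := fun a b =>
  Metric.hausdorffDist (F1 X n ∪ SFnQ X n ⁻¹' {a}) (F1 X n ∪ SFnQ X n ⁻¹' {b})

/-- `g` is `TT_{++}`: for all nonempty open `U, V` the set
`{k ∈ ℕ : U ∩ g^{-k}(V) ≠ ∅}` is infinite. -/
def TTpp {Z : Type*} [TopologicalSpace Z] (g : Z → Z) : Prop :=
  ∀ U V : Set Z, IsOpen U → IsOpen V → U.Nonempty → V.Nonempty →
    {k : ℕ | (U ∩ g^[k] ⁻¹' V).Nonempty}.Infinite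


lemma FnMap_iter_coe (f : X → X) (k : ℕ) (A : Fn X n) :
    (((FnMap X n f)^[k] A).1 : Set X) = f^[k] '' (A.1 : Set X) := by
  induction k with
  | zero => simp
  | succ k ih =>
    rw [Function.iterate_succ_apply', Function.iterate_succ']
    show f '' (((FnMap X n f)^[k] A).1 : Set X) = _
    rw [ih, Set.image_comp]

lemma SFnMap_iter (f : X → X) (k : ℕ) (A : Fn X n) :
    (SFnMap X n f)^[k] (SFnQ X n A) = SFnQ X n ((FnMap X n f)^[k] A) := by
  induction k with
  | zero => rfl
  | succ k ih =>
    rw [Function.iterate_succ_apply', ih, Function.iterate_succ_apply']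
    rfl

lemma isOpen_setFn {U : Set X} (hU : IsOpen U) :
    IsOpen {A : Fn X n | (A.1 : Set X) ⊆ U} := by
  rw [Metric.isOpen_iff]
  intro A hA
  obtain ⟨δ, δpos, hδ⟩ := A.1.isCompact.exists_thickening_subset_open hU hA
  refine ⟨δ, δpos, fun B hB => ?_⟩
  intro x hx
  apply hδ
  rw [Metric.mem_thickening_iff]
  have hd : Metric.hausdorffDist (B.1 : Set X) (A.1 : Set X) < δ := by
    have : dist B A < δ := hB
    rwa [Subtype.dist_eq, NonemptyCompacts.dist_eq] at this
  obtain ⟨y, hy, hxy⟩ := Metric.exists_dist_lt_of_hausdorffDist_lt hx hd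
    (Metric.hausdorffEdist_ne_top_of_nonempty_of_bounded B.1.nonempty A.1.nonempty
      B.1.isCompact.isBounded A.1.isCompact.isBounded)
  exact ⟨y, hy, hxy⟩

lemma isClosed_F1 : IsClosed (F1 X n) := by
  rw [← isOpen_compl_iff, Metric.isOpen_iff]
  intro A hA
  obtain ⟨x, hx⟩ := A.1.nonempty
  have hex : ∃ y ∈ (A.1 : Set X), y ≠ x := by
    by_contra h
    push_neg at h
    exact hA ⟨x, Set.eq_singleton_iff_unique_mem.mpr ⟨hx, h⟩⟩
  obtain ⟨y, hy, hyx⟩ := hex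
  have hpos : 0 < dist y x := dist_pos.2 hyx
  refine ⟨dist y x / 3, by linarith, fun B hB hBF1 => ?_⟩
  obtain ⟨z, hz⟩ := hBF1
  have hd : Metric.hausdorffDist (A.1 : Set X) (B.1 : Set X) < dist y x / 3 := by
    have : dist B A < dist y x / 3 := hB
    rw [Subtype.dist_eq, NonemptyCompacts.dist_eq] at this
    rwa [Metric.hausdorffDist_comm] at this
  have hfin := Metric.hausdorffEdist_ne_top_of_nonempty_of_bounded A.1.nonempty B.1.nonempty
      A.1.isCompact.isBounded B.1.isCompact.isBounded
  obtain ⟨b, hb, hxb⟩ := Metric.exists_dist_lt_of_hausdorffDist_lt hx hd hfin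
  obtain ⟨c, hc, hyc⟩ := Metric.exists_dist_lt_of_hausdorffDist_lt hy hd hfin
  have htri : dist y x ≤ dist y c + dist c x := dist_triangle y c x
  rw [hz, Set.mem_singleton_iff] at hb hc
  rw [hb, dist_comm x z] at hxb
  rw [hc] at hyc htri
  linarith

lemma exists_notin_F1 (hX : Perfect (Set.univ : Set X)) (hn : 2 ≤ n)
    {W : Set (Fn X n)} (hW : IsOpen W) (hWne : W.Nonempty) : (W \ F1 X n).Nonempty := by
  obtain ⟨A, hA⟩ := hWne
  by_cases hA1 : A ∈ F1 X n
  · obtain ⟨x, hx⟩ := hA1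
    obtain ⟨ε, εpos, hε⟩ := Metric.isOpen_iff.1 hW A hA
    have hacc : AccPt x (Filter.principal (Set.univ : Set X)) := hX.acc x (Set.mem_univ x)
    have hnb : (nhdsWithin x {x}ᶜ).NeBot := by
      simpa [AccPt, Filter.principal_univ] using hacc
    have hmem : Metric.ball x ε ∩ {x}ᶜ ∈ nhdsWithin x {x}ᶜ :=
      Filter.inter_mem (mem_nhdsWithin_of_mem_nhds (Metric.ball_mem_nhds x εpos))
        self_mem_nhdsWithin
    obtain ⟨y, hyball, hyx⟩ := Filter.nonempty_of_mem hmem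
    have hyx' : y ≠ x := hyx
    have hxy : x ≠ y := fun h => hyx' h.symm
    set B : Fn X n := ⟨⟨⟨{x, y}, ((Set.finite_singleton y).insert x).isCompact⟩,
      ⟨x, by simp⟩⟩, (Set.finite_singleton y).insert x,
      by show ({x, y} : Set X).ncard ≤ n; rw [Set.ncard_pair hxy]; exact hn⟩
      with hBdef
    have hBW : B ∈ W := by
      apply hε
      have hle : Metric.hausdorffDist ({x, y} : Set X) ({x} : Set X) ≤ dist y x := by
        apply Metric.hausdorffDist_le_of_mem_dist dist_nonneg
        · rintro z (rfl | rfl)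
          · exact ⟨z, rfl, by simp [dist_nonneg]⟩
          · exact ⟨x, rfl, le_refl _⟩
        · rintro z rfl
          exact ⟨z, Or.inl rfl, by simp [dist_nonneg]⟩
      have : dist B A = Metric.hausdorffDist ({x, y} : Set X) ({x} : Set X) := by
        rw [Subtype.dist_eq, NonemptyCompacts.dist_eq, hx]
        rfl
      rw [Metric.mem_ball, this]
      calc Metric.hausdorffDist ({x, y} : Set X) ({x} : Set X) ≤ dist y x := hle
        _ < ε := by simpa [dist_comm] using hyball
    refine ⟨B, hBW, ?_⟩
    rintro ⟨z, hz⟩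
    have hxz : x = z := by
      have : x ∈ ({z} : Set X) := hz ▸ (Or.inl rfl : x ∈ ({x, y} : Set X))
      exact this
    have hyz : y = z := by
      have : y ∈ ({z} : Set X) := hz ▸ (Or.inr rfl : y ∈ ({x, y} : Set X))
      exact this
    exact hxy (hxz.trans hyz.symm)
  · exact ⟨A, hA, hA1⟩

lemma sat_F1 {W : Set (Fn X n)} (hdisj : Disjoint W (F1 X n)) :
    SFnQ X n ⁻¹' (SFnQ X n '' W) = W := by
  ext B
  constructor
  · rintro ⟨A, hA, hAB⟩
    have := Quotient.exact hAB
    rcases this with rfl | ⟨hA1, _⟩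
    · exact hA
    · exact absurd hA1 (Set.disjoint_left.1 hdisj hA)
  · intro hB
    exact ⟨B, hB, rfl⟩

lemma isOpen_image_q {W : Set (Fn X n)} (hW : IsOpen W) (hdisj : Disjoint W (F1 X n)) :
    IsOpen (SFnQ X n '' W) := by
  rw [← isQuotientMap_quotient_mk'.isOpen_preimage]
  show IsOpen (SFnQ X n ⁻¹' (SFnQ X n '' W))
  rw [sat_F1 X n hdisj]
  exact hW

theorem stmt15 (X : Type*) [MetricSpace X] [CompactSpace X] [Nontrivial X]
    (hX : Perfect (Set.univ : Set X))
    (n : ℕ) (hn : 2 ≤ n) (f : X → X) (hf : Continuous f) :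
    (TTpp (FnMap X n f) ↔ TTpp (SFnMap X n f)) ∧
    (TTpp (FnMap X n f) → TTpp f) := by
  have hqc : Continuous (SFnQ X n) := continuous_quotient_mk'
  have hfwd : TTpp (FnMap X n f) → TTpp (SFnMap X n f) := by
    intro h U V hU hV hUne hVne
    obtain ⟨χ, hχ⟩ := hUne
    obtain ⟨A, rfl⟩ := Quotient.exists_rep χ
    obtain ⟨ψ, hψ⟩ := hVne
    obtain ⟨C, rfl⟩ := Quotient.exists_rep ψ
    have := h (SFnQ X n ⁻¹' U) (SFnQ X n ⁻¹' V) (hU.preimage hqc) (hV.preimage hqc)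
      ⟨A, hχ⟩ ⟨C, hψ⟩
    refine this.mono fun k hk => ?_
    obtain ⟨B, hBU, hBV⟩ := hk
    exact ⟨SFnQ X n B, hBU, by rw [Set.mem_preimage, SFnMap_iter]; exact hBV⟩
  have hbwd : TTpp (SFnMap X n f) → TTpp (FnMap X n f) := by
    intro h U V hU hV hUne hVne
    have hdU : Disjoint (U \ F1 X n) (F1 X n) := disjoint_sdiff_left
    have hdV : Disjoint (V \ F1 X n) (F1 X n) := disjoint_sdiff_left
    have := h (SFnQ X n '' (U \ F1 X n)) (SFnQ X n '' (V \ F1 X n))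
      (isOpen_image_q X n (hU.sdiff (isClosed_F1 X n)) hdU)
      (isOpen_image_q X n (hV.sdiff (isClosed_F1 X n)) hdV)
      ((exists_notin_F1 X n hX hn hU hUne).image _)
      ((exists_notin_F1 X n hX hn hV hVne).image _)
    refine this.mono fun k hk => ?_
    obtain ⟨χ, hχU, hχV⟩ := hk
    obtain ⟨A, hAU, rfl⟩ := hχU
    rw [Set.mem_preimage, SFnMap_iter] at hχV
    have hmem : (FnMap X n f)^[k] A ∈ V \ F1 X n := by
      rw [← sat_F1 X n hdV]
      exact hχV
    exact ⟨A, hAU.1, hmem.1⟩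
  have hb : TTpp (FnMap X n f) → TTpp f := by
    intro h U V hU hV hUne hVne
    obtain ⟨x, hx⟩ := hUne
    obtain ⟨y, hy⟩ := hVne
    have hsing : ∀ z : X, ∃ A : Fn X n, (A.1 : Set X) = {z} := fun z =>
      ⟨⟨⟨⟨{z}, isCompact_singleton⟩, Set.singleton_nonempty z⟩,
        Set.finite_singleton z, by show ({z} : Set X).ncard ≤ n; rw [Set.ncard_singleton]; omega⟩, rfl⟩
    obtain ⟨Ax, hAx⟩ := hsing x
    obtain ⟨Ay, hAy⟩ := hsing y
    have := h {A : Fn X n | (A.1 : Set X) ⊆ U} {A : Fn X n | (A.1 : Set X) ⊆ V}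
      (isOpen_setFn X n hU) (isOpen_setFn X n hV)
      ⟨Ax, by rw [Set.mem_setOf_eq, hAx]; exact Set.singleton_subset_iff.mpr hx⟩
      ⟨Ay, by rw [Set.mem_setOf_eq, hAy]; exact Set.singleton_subset_iff.mpr hy⟩
    refine this.mono fun k hk => ?_
    obtain ⟨A, hAU, hAV⟩ := hk
    obtain ⟨a, ha⟩ := A.1.nonempty
    refine ⟨a, hAU ha, ?_⟩
    have hsub : (((FnMap X n f)^[k] A).1 : Set X) ⊆ V := hAV
    rw [FnMap_iter_coe] at hsub
    exact hsub ⟨a, ha, rfl⟩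
  exact ⟨⟨hfwd, hbwd⟩, hb⟩
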